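/- Lemma 3.2(1): Let u : Ω → ℝ be Lipschitz and let φ be a test function. For ε ∈ ℝ set D(ε) = ∫_{Ω ∖ S(u_ε)} N(u_ε)(x)·∇φ(x) dx + ∫_Ω H(x)φ(x) dx. Then for any two regular values ε₁ ≤ ε₂ one has D(ε₁) ≤ D(ε₂); that is, the derivative d𝔉(u_ε)/dε is a nondecreasing function of ε on the set of regular values. -/

import Mathlib

open MeasureTheory
open scoped RealInnerProductSpace ENNReal

/-- The vector field `∇u + ε ∇φ + F⃗` (the a.e. gradient of `u_ε = u + ε φ`
shifted by `F⃗`). -/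
noncomputable def gradShift {m : ℕ} (u φ : EuclideanSpace ℝ (Fin m) → ℝ)
    (F : EuclideanSpace ℝ (Fin m) → EuclideanSpace ℝ (Fin m)) (ε : ℝ)
    (x : EuclideanSpace ℝ (Fin m)) : EuclideanSpace ℝ (Fin m) :=
  gradient u x + ε • gradient φ x + F x

/-- The generalized p-area functional `𝔉(u_ε)` of `u_ε = u + ε φ`. -/
noncomputable def pArea {m : ℕ} (Ω : Set (EuclideanSpace ℝ (Fin m)))
    (u φ : EuclideanSpace ℝ (Fin m) → ℝ)
    (F : EuclideanSpace ℝ (Fin m) → EuclideanSpace ℝ (Fin m))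
    (H : EuclideanSpace ℝ (Fin m) → ℝ) (ε : ℝ) : ℝ :=
  ∫ x in Ω, (‖gradShift u φ F ε x‖ + H x * (u x + ε * φ x))

/-- The singular set `S(u_ε) = {x ∈ Ω : ∇u_ε + F⃗ = 0}` of `u_ε = u + ε φ`. -/
def singSet {m : ℕ} (Ω : Set (EuclideanSpace ℝ (Fin m)))
    (u φ : EuclideanSpace ℝ (Fin m) → ℝ)
    (F : EuclideanSpace ℝ (Fin m) → EuclideanSpace ℝ (Fin m)) (ε : ℝ) :
    Set (EuclideanSpace ℝ (Fin m)) :=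
  {x ∈ Ω | gradShift u φ F ε x = 0}

/-- Monotonicity of the normalized vector field along a line: key pointwise
inequality behind Lemma 3.2(1). -/
lemma inner_normalize_mono {E : Type*} [NormedAddCommGroup E] [InnerProductSpace ℝ E]
    {w b : E} {t : ℝ} (ht : 0 ≤ t) (h1 : w ≠ 0) (h2 : w + t • b ≠ 0) :
    ⟪‖w‖⁻¹ • w, b⟫ ≤ ⟪‖w + t • b‖⁻¹ • (w + t • b), b⟫ := by
  rcases eq_or_lt_of_le ht with rfl | ht
  · simp
  set v := w + t • b with hv
  have ha : (0:ℝ) < ‖w‖ := norm_pos_iff.mpr h1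
  have hc : (0:ℝ) < ‖v‖ := norm_pos_iff.mpr h2
  have hp : ⟪w, v⟫ ≤ ‖w‖ * ‖v‖ := real_inner_le_norm w v
  have h1' : t * ⟪w, b⟫ = ⟪w, v⟫ - ‖w‖ ^ 2 := by
    simp [hv, inner_add_right, real_inner_smul_right, real_inner_self_eq_norm_sq]
  have h2' : t * ⟪v, b⟫ = ‖v‖ ^ 2 - ⟪w, v⟫ := by
    have hvv : ⟪v, v⟫ = ⟪v, w⟫ + t * ⟪v, b⟫ := by
      rw [hv]; simp only [inner_add_right, real_inner_smul_right]
    have := real_inner_self_eq_norm_sq v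
    have hcomm : ⟪w, v⟫ = ⟪v, w⟫ := real_inner_comm v w
    linarith
  rw [real_inner_smul_left, real_inner_smul_left, inv_mul_eq_div, inv_mul_eq_div,
    div_le_div_iff₀ ha hc]
  nlinarith [mul_nonneg (add_pos ha hc).le (sub_nonneg.mpr hp), h1', h2']

lemma measurable_gradient'' {m : ℕ} (f : EuclideanSpace ℝ (Fin m) → ℝ) :
    Measurable (gradient f) :=
  (InnerProductSpace.toDual ℝ (EuclideanSpace ℝ (Fin m))).symm.continuous.measurable.comp
    (measurable_fderiv ℝ f)

lemma norm_gradient_le' {m : ℕ} {f : EuclideanSpace ℝ (Fin m) → ℝ} {K : NNReal}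
    (hf : LipschitzWith K f) (x : EuclideanSpace ℝ (Fin m)) : ‖gradient f x‖ ≤ K := by
  have : ‖gradient f x‖ = ‖fderiv ℝ f x‖ := by
    simp [gradient, LinearIsometryEquiv.norm_map]
  rw [this]
  by_cases h : DifferentiableAt ℝ f x
  · exact norm_fderiv_le_of_lipschitz ℝ hf
  · simp [fderiv_zero_of_not_differentiableAt h]

lemma measurable_gradShift {m : ℕ} (u φ : EuclideanSpace ℝ (Fin m) → ℝ)
    {g : EuclideanSpace ℝ (Fin m) → EuclideanSpace ℝ (Fin m)} (hg : Measurable g) (ε : ℝ) :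
    Measurable (gradShift u φ g ε) :=
  ((measurable_gradient'' u).add ((measurable_gradient'' φ).const_smul ε)).add hg

/-- Replacing the drift `F` by an a.e. equal measurable version `g`, and dropping
the (harmless) singular set from the domain of integration. -/
lemma step_reduce {m : ℕ} {Ω : Set (EuclideanSpace ℝ (Fin m))}
    (hΩmeas : MeasurableSet Ω)
    {F g : EuclideanSpace ℝ (Fin m) → EuclideanSpace ℝ (Fin m)}
    (hg : Measurable g)
    (hFg : F =ᵐ[volume.restrict Ω] g)
    (u φ : EuclideanSpace ℝ (Fin m) → ℝ) (ε : ℝ) :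
    (∫ x in Ω \ singSet Ω u φ F ε,
        ⟪‖gradShift u φ F ε x‖⁻¹ • gradShift u φ F ε x, gradient φ x⟫) =
    ∫ x in Ω, ⟪‖gradShift u φ g ε x‖⁻¹ • gradShift u φ g ε x, gradient φ x⟫ := by
  have hN : ∀ᵐ x ∂(volume : Measure (EuclideanSpace ℝ (Fin m))), x ∈ Ω → F x = g x := by
    have h0 : (volume.restrict Ω) {x | ¬ F x = g x} = 0 := hFg
    rw [Measure.restrict_apply' hΩmeas] at h0
    rw [ae_iff]
    refine measure_mono_null ?_ h0
    intro x hx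
    simp only [Set.mem_setOf_eq, Classical.not_imp] at hx
    exact ⟨hx.2, hx.1⟩
  -- Step A: change the set using a.e. equality
  have hAE : (Ω \ singSet Ω u φ F ε : Set _) =ᵐ[volume] (Ω \ singSet Ω u φ g ε : Set _) := by
    rw [Filter.eventuallyEq_set]
    filter_upwards [hN] with x hx
    by_cases hxΩ : x ∈ Ω
    · have hgs : gradShift u φ F ε x = gradShift u φ g ε x := by
        simp [gradShift, hx hxΩ]
      have hmem : x ∈ singSet Ω u φ F ε ↔ x ∈ singSet Ω u φ g ε := by
        unfold singSet
        rw [Set.mem_setOf_eq, Set.mem_setOf_eq, hgs]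
      simp only [Set.mem_diff, hmem]
    · have ha1 : x ∉ Ω \ singSet Ω u φ F ε := fun h => hxΩ h.1
      have ha2 : x ∉ Ω \ singSet Ω u φ g ε := fun h => hxΩ h.1
      simp only [ha1, ha2]
  rw [setIntegral_congr_set hAE]
  -- Step B: change the integrand using a.e. equality
  have hFg' : ∀ᵐ x ∂(volume.restrict (Ω \ singSet Ω u φ g ε)), F x = g x :=
    ae_restrict_of_ae_restrict_of_subset Set.diff_subset hFg
  rw [show (∫ x in Ω \ singSet Ω u φ g ε,
        ⟪‖gradShift u φ F ε x‖⁻¹ • gradShift u φ F ε x, gradient φ x⟫) =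
      ∫ x in Ω \ singSet Ω u φ g ε,
        ⟪‖gradShift u φ g ε x‖⁻¹ • gradShift u φ g ε x, gradient φ x⟫ from
    integral_congr_ae (by filter_upwards [hFg'] with x hx; simp [gradShift, hx])]
  -- Step C: the integrand vanishes on the singular set, so we may integrate over Ω
  have hS : MeasurableSet (singSet Ω u φ g ε) := by
    have : singSet Ω u φ g ε = Ω ∩ (gradShift u φ g ε) ⁻¹' {0} := by
      ext x; simp [singSet, Set.mem_inter_iff]
    rw [this]
    exact hΩmeas.inter ((measurable_gradShift u φ hg ε) (measurableSet_singleton 0))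
  have hind : (Ω \ singSet Ω u φ g ε).indicator
        (fun x => ⟪‖gradShift u φ g ε x‖⁻¹ • gradShift u φ g ε x, gradient φ x⟫) =
      Ω.indicator
        (fun x => ⟪‖gradShift u φ g ε x‖⁻¹ • gradShift u φ g ε x, gradient φ x⟫) := by
    funext x
    by_cases hxΩ : x ∈ Ω
    · by_cases hxS : x ∈ singSet Ω u φ g ε
      · have hv0 : gradShift u φ g ε x = 0 := hxS.2
        simp [Set.indicator, hxΩ, hxS, hv0]
      · simp [Set.indicator, hxΩ, hxS]
    · have : x ∉ Ω \ singSet Ω u φ g ε := fun h => hxΩ h.1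
      simp [Set.indicator, hxΩ, this]
  rw [← integral_indicator (hΩmeas.diff hS), hind, integral_indicator hΩmeas]


/-- **Lemma 3.2(1)**: the derivative
`D(ε) = ∫_{Ω ∖ S(u_ε)} N(u_ε)·∇φ + ∫_Ω H φ` of `ε ↦ 𝔉(u_ε)` is nondecreasing
on the set of regular values. -/
theorem deriv_pArea_monotone {m : ℕ} (hm : 1 ≤ m)
    (Ω : Set (EuclideanSpace ℝ (Fin m)))
    (hΩopen : IsOpen Ω) (hΩbdd : Bornology.IsBounded Ω)
    (hΩne : Ω.Nonempty) (hΩconn : IsConnected Ω)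
    (F : EuclideanSpace ℝ (Fin m) → EuclideanSpace ℝ (Fin m))
    (hF : IntegrableOn F Ω volume)
    (H : EuclideanSpace ℝ (Fin m) → ℝ)
    (hH : MemLp H ⊤ (volume.restrict Ω))
    (u : EuclideanSpace ℝ (Fin m) → ℝ) (hu : ∃ K, LipschitzOnWith K u Ω)
    (φ : EuclideanSpace ℝ (Fin m) → ℝ) (hφ : ∃ K, LipschitzWith K φ)
    (hφsupp : HasCompactSupport φ) (hφΩ : tsupport φ ⊆ Ω)
    (ε₁ ε₂ : ℝ) (hle : ε₁ ≤ ε₂)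
    (hreg₁ : volume (singSet Ω u φ F ε₁ ∩ {x | gradient φ x ≠ 0}) = 0)
    (hreg₂ : volume (singSet Ω u φ F ε₂ ∩ {x | gradient φ x ≠ 0}) = 0) :
    (∫ x in Ω \ singSet Ω u φ F ε₁,
        ⟪‖gradShift u φ F ε₁ x‖⁻¹ • gradShift u φ F ε₁ x, gradient φ x⟫) +
      (∫ x in Ω, H x * φ x) ≤
    (∫ x in Ω \ singSet Ω u φ F ε₂,
        ⟪‖gradShift u φ F ε₂ x‖⁻¹ • gradShift u φ F ε₂ x, gradient φ x⟫) +
      (∫ x in Ω, H x * φ x) := by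
  obtain ⟨K, hK⟩ := hφ
  have hΩmeas : MeasurableSet Ω := hΩopen.measurableSet
  -- a measurable version of F
  have hFm := hF.aestronglyMeasurable
  set g := hFm.mk F with hgdef
  have hgmeas : Measurable g := hFm.stronglyMeasurable_mk.measurable
  have hFg : F =ᵐ[volume.restrict Ω] g := hFm.ae_eq_mk
  rw [step_reduce hΩmeas hgmeas hFg u φ ε₁, step_reduce hΩmeas hgmeas hFg u φ ε₂]
  refine add_le_add_left ?_ _
  -- Integrability of both integrands on Ω
  have hvol : volume Ω < ⊤ := hΩbdd.measure_lt_top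
  have hint : ∀ ε : ℝ, Integrable
      (fun x => ⟪‖gradShift u φ g ε x‖⁻¹ • gradShift u φ g ε x, gradient φ x⟫)
      (volume.restrict Ω) := by
    intro ε
    have hv : Measurable (gradShift u φ g ε) := measurable_gradShift u φ hgmeas ε
    have hmeas : Measurable
        (fun x => ⟪‖gradShift u φ g ε x‖⁻¹ • gradShift u φ g ε x, gradient φ x⟫) :=
      Measurable.inner ((hv.norm.inv).smul hv) (measurable_gradient'' φ)
    refine Integrable.mono' (g := fun _ => (K : ℝ))
      (integrableOn_const hvol.ne) hmeas.aestronglyMeasurable ?_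
    refine Filter.Eventually.of_forall fun x => ?_
    have h1 : ‖‖gradShift u φ g ε x‖⁻¹ • gradShift u φ g ε x‖ ≤ 1 := by
      rcases eq_or_ne (gradShift u φ g ε x) 0 with h | h
      · simp [h]
      · rw [norm_smul, norm_inv, norm_norm, inv_mul_cancel₀ (norm_ne_zero_iff.mpr h)]
    calc ‖⟪‖gradShift u φ g ε x‖⁻¹ • gradShift u φ g ε x, gradient φ x⟫‖
        ≤ ‖‖gradShift u φ g ε x‖⁻¹ • gradShift u φ g ε x‖ * ‖gradient φ x‖ :=
          norm_inner_le_norm _ _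
      _ ≤ 1 * (K : ℝ) := by
          exact mul_le_mul h1 (norm_gradient_le' hK x) (norm_nonneg _) zero_le_one
      _ = (K : ℝ) := one_mul _
  -- transfer the regularity hypotheses to g
  have hNset : volume {x | x ∈ Ω ∧ F x ≠ g x} = 0 := by
    have h0 : (volume.restrict Ω) {x | ¬ F x = g x} = 0 := hFg
    rw [Measure.restrict_apply' hΩmeas] at h0
    refine measure_mono_null ?_ h0
    intro x hx
    exact ⟨hx.2, hx.1⟩
  have hreg' : ∀ ε : ℝ, volume (singSet Ω u φ F ε ∩ {x | gradient φ x ≠ 0}) = 0 →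
      volume (singSet Ω u φ g ε ∩ {x | gradient φ x ≠ 0}) = 0 := by
    intro ε h
    refine measure_mono_null (fun x hx => ?_)
      (measure_union_null h hNset)
    rcases hx with ⟨hxS, hxg⟩
    by_cases hFgx : F x = g x
    · exact Or.inl ⟨⟨hxS.1, by rw [show gradShift u φ F ε x = gradShift u φ g ε x by
        simp [gradShift, hFgx]]; exact hxS.2⟩, hxg⟩
    · exact Or.inr ⟨hxS.1, hFgx⟩
  have h1 : ∀ᵐ x ∂(volume : Measure (EuclideanSpace ℝ (Fin m))),
      x ∉ singSet Ω u φ g ε₁ ∩ {x | gradient φ x ≠ 0} :=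
    measure_eq_zero_iff_ae_notMem.mp (hreg' ε₁ hreg₁)
  have h2 : ∀ᵐ x ∂(volume : Measure (EuclideanSpace ℝ (Fin m))),
      x ∉ singSet Ω u φ g ε₂ ∩ {x | gradient φ x ≠ 0} :=
    measure_eq_zero_iff_ae_notMem.mp (hreg' ε₂ hreg₂)
  -- a.e. pointwise monotonicity
  refine integral_mono_ae (hint ε₁) (hint ε₂) ?_
  filter_upwards [ae_restrict_mem hΩmeas, ae_restrict_of_ae h1, ae_restrict_of_ae h2]
    with x hxΩ hx1 hx2
  by_cases hb : gradient φ x = 0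
  · simp [hb]
  · have hv1 : gradShift u φ g ε₁ x ≠ 0 := fun h0 => hx1 ⟨⟨hxΩ, h0⟩, hb⟩
    have hv2 : gradShift u φ g ε₂ x ≠ 0 := fun h0 => hx2 ⟨⟨hxΩ, h0⟩, hb⟩
    have hrep : gradShift u φ g ε₂ x
        = gradShift u φ g ε₁ x + (ε₂ - ε₁) • gradient φ x := by
      simp only [gradShift, sub_smul]
      module
    rw [hrep]
    exact inner_normalize_mono (sub_nonneg.mpr hle) hv1 (hrep ▸ hv2)
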